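/- Let Ω ⊂ ℝ^d be a compact set with Lebesgue measure |Ω| > 0, and for each N let X_N = (x_1^{(N)},…,x_N^{(N)}) be an N-tuple of points of Ω such that the sequence (X_N) is asymptotically uniformly distributed in Ω. Let κ_A, κ_B : Ω × Ω → ℝ be continuous, define the convolved kernel κ_C(x,y) := ∫_Ω κ_A(x,z) κ_B(z,y) dz, and assume ∫_Ω ∫_Ω κ_C(x,y)² dx dy > 0. For each N define the matrices K_A^{(N)} := [κ_A(x_i^{(N)}, x_j^{(N)})]_{i,j=1}^N, K_B^{(N)} := [κ_B(x_i^{(N)}, x_j^{(N)})]_{i,j=1}^N and K_C^{(N)} := (N/|Ω|)·[κ_C(x_i^{(N)}, x_j^{(N)})]_{i,j=1}^N. Then ‖K_C^{(N)} − K_A^{(N)} K_B^{(N)}‖_F / ‖K_C^{(N)}‖_F → 0 as N → ∞. -/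

import Mathlib

open MeasureTheory Filter Matrix

/-- The Frobenius norm of a real `N × N` matrix. -/
noncomputable def frobNorm {N : ℕ} (M : Matrix (Fin N) (Fin N) ℝ) : ℝ :=
  Real.sqrt (∑ i, ∑ j, (M i j) ^ 2)

private lemma frobNorm_nonneg {N : ℕ} (M : Matrix (Fin N) (Fin N) ℝ) : 0 ≤ frobNorm M :=
  Real.sqrt_nonneg _

private lemma absSumBound {V b : ℝ} (hV : 0 ≤ V) (hb : 0 ≤ b) {N : ℕ} {g : Fin N → ℝ}
    (hg : ∀ i, |g i| ≤ b) : |V / N * ∑ i, g i| ≤ V * b := by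
  have h1 : |∑ i, g i| ≤ N * b := by
    calc |∑ i, g i| ≤ ∑ i, |g i| := Finset.abs_sum_le_sum_abs _ _
    _ ≤ ∑ _i : Fin N, b := Finset.sum_le_sum fun i _ => hg i
    _ = N * b := by simp [Finset.sum_const, Finset.card_univ, mul_comm]
  have hVN : 0 ≤ V / N := div_nonneg hV (Nat.cast_nonneg N)
  calc |V / N * ∑ i, g i| = V / N * |∑ i, g i| := by rw [abs_mul, abs_of_nonneg hVN]
  _ ≤ V / N * (N * b) := mul_le_mul_of_nonneg_left h1 hVN
  _ ≤ V * b := by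
      rcases Nat.eq_zero_or_pos N with h | h
      · simp only [h, Nat.cast_zero, zero_mul, mul_zero]
        positivity
      · have hN : (N : ℝ) ≠ 0 := Nat.cast_ne_zero.2 h.ne'
        rw [show V / (N:ℝ) * ((N:ℝ) * b) = V * b * ((N:ℝ) / (N:ℝ)) by ring,
          div_self hN, mul_one]

private lemma unifLim {d : ℕ} {Ω : Set (EuclideanSpace ℝ (Fin d))}
    (hΩc : IsCompact Ω)
    {X : (N : ℕ) → Fin N → EuclideanSpace ℝ (Fin d)}
    (hX : ∀ N i, X N i ∈ Ω)
    (hunif : ∀ f : EuclideanSpace ℝ (Fin d) → ℝ, ContinuousOn f Ω →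
      Tendsto (fun N : ℕ => ((volume Ω).toReal / N) * ∑ i : Fin N, f (X N i))
        atTop (nhds (∫ x in Ω, f x)))
    {P : Type} [MetricSpace P] {K : Set P} (hK : IsCompact K)
    {h : P → EuclideanSpace ℝ (Fin d) → ℝ}
    (hh : ContinuousOn (fun q : P × EuclideanSpace ℝ (Fin d) => h q.1 q.2) (K ×ˢ Ω)) :
    TendstoUniformlyOn
      (fun (N : ℕ) (p : P) => ((volume Ω).toReal / N) * ∑ i : Fin N, h p (X N i))
      (fun p => ∫ z in Ω, h p z) atTop K := by
  set V := (volume Ω).toReal with hVdef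
  have hV0 : 0 ≤ V := ENNReal.toReal_nonneg
  have hΩm : MeasurableSet Ω := hΩc.isClosed.measurableSet
  rw [Metric.tendstoUniformlyOn_iff]
  intro ε hε
  set ε1 := ε / (2 * V + 2) with hε1def
  have hε1 : 0 < ε1 := by positivity
  have hKΩ : IsCompact (K ×ˢ Ω) := hK.prod hΩc
  have huc := hKΩ.uniformContinuousOn_of_continuous hh
  rw [Metric.uniformContinuousOn_iff] at huc
  obtain ⟨δ, hδ, hucd⟩ := huc ε1 hε1
  obtain ⟨t, htK, hcov⟩ := hK.elim_nhds_subcover (fun c => Metric.ball c δ)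
    (fun c _ => Metric.ball_mem_nhds c hδ)
  have hcontp : ∀ p ∈ K, ContinuousOn (fun z => h p z) Ω := by
    intro p hp
    exact ContinuousOn.comp' (f := fun z : EuclideanSpace ℝ (Fin d) => (p, z)) hh
      (Continuous.continuousOn (by fun_prop)) (fun z hz => ⟨hp, hz⟩)
  have hptc : ∀ c ∈ t, ∀ᶠ N : ℕ in atTop,
      dist (∫ z in Ω, h c z) (V / N * ∑ i : Fin N, h c (X N i)) < ε1 := by
    intro c hc
    have h1 := hunif (fun z => h c z) (hcontp c (htK c hc))
    have h2 := Metric.tendsto_nhds.mp h1 ε1 hε1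
    exact h2.mono fun N hN => by rwa [dist_comm]
  have hev := (Filter.eventually_all_finset t).2 hptc
  filter_upwards [hev] with N hN p hp
  obtain ⟨c, hct, hpball⟩ : ∃ c ∈ t, p ∈ Metric.ball c δ := by
    have := hcov hp
    simpa using this
  have hcK : c ∈ K := htK c hct
  have hdpc : dist p c < δ := by rwa [Metric.mem_ball] at hpball
  -- pointwise bound on h differences
  have hpt : ∀ z ∈ Ω, |h p z - h c z| ≤ ε1 := by
    intro z hz
    have hmem1 : (p, z) ∈ K ×ˢ Ω := ⟨hp, hz⟩
    have hmem2 : (c, z) ∈ K ×ˢ Ω := ⟨hcK, hz⟩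
    have hd : dist ((p, z) : P × EuclideanSpace ℝ (Fin d)) (c, z) < δ := by
      rw [Prod.dist_eq]
      simpa [dist_nonneg] using hdpc
    have := hucd (p, z) hmem1 (c, z) hmem2 hd
    rw [Real.dist_eq] at this
    exact this.le
  -- bound 1 : integrals
  have hintp : IntegrableOn (fun z => h p z) Ω volume :=
    (hcontp p hp).integrableOn_compact hΩc
  have hintc : IntegrableOn (fun z => h c z) Ω volume :=
    (hcontp c hcK).integrableOn_compact hΩc
  have hb1 : dist (∫ z in Ω, h p z) (∫ z in Ω, h c z) ≤ ε1 * V := by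
    rw [Real.dist_eq, ← integral_sub hintp hintc]
    have := norm_setIntegral_le_of_norm_le_const (μ := volume)
      hΩc.measure_lt_top (f := fun z => h p z - h c z) (C := ε1)
      (fun z hz => by simpa [Real.norm_eq_abs] using hpt z hz)
    simpa [Real.norm_eq_abs, hVdef, Measure.real] using this
  -- bound 3 : sums
  have hb3 : dist (V / N * ∑ i : Fin N, h c (X N i)) (V / N * ∑ i : Fin N, h p (X N i))
      ≤ V * ε1 := by
    rw [Real.dist_eq, ← mul_sub, ← Finset.sum_sub_distrib]
    exact absSumBound hV0 hε1.le fun i => by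
      rw [abs_sub_comm]; exact hpt (X N i) (hX N i)
  have hb2 := hN c hct
  have htri := dist_triangle4 (∫ z in Ω, h p z) (∫ z in Ω, h c z)
    (V / N * ∑ i : Fin N, h c (X N i)) (V / N * ∑ i : Fin N, h p (X N i))
  have hεeq : ε = (2 * V + 2) * ε1 := by
    rw [hε1def]
    field_simp
  calc dist (∫ z in Ω, h p z) (V / N * ∑ i : Fin N, h p (X N i))
      ≤ ε1 * V + ε1 + V * ε1 := by
        exact htri.trans (add_le_add (add_le_add hb1 hb2.le) hb3)
  _ < ε := by nlinarith [hε1, hV0]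

theorem stmt_0 {d : ℕ} (Ω : Set (EuclideanSpace ℝ (Fin d)))
    (hΩc : IsCompact Ω) (hΩpos : 0 < (volume Ω).toReal)
    (X : (N : ℕ) → Fin N → EuclideanSpace ℝ (Fin d))
    (hX : ∀ N i, X N i ∈ Ω)
    (hunif : ∀ f : EuclideanSpace ℝ (Fin d) → ℝ, ContinuousOn f Ω →
      Tendsto (fun N : ℕ => ((volume Ω).toReal / N) * ∑ i : Fin N, f (X N i))
        atTop (nhds (∫ x in Ω, f x)))
    (κA κB κC : EuclideanSpace ℝ (Fin d) → EuclideanSpace ℝ (Fin d) → ℝ)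
    (hκA : ContinuousOn
      (fun p : EuclideanSpace ℝ (Fin d) × EuclideanSpace ℝ (Fin d) => κA p.1 p.2) (Ω ×ˢ Ω))
    (hκB : ContinuousOn
      (fun p : EuclideanSpace ℝ (Fin d) × EuclideanSpace ℝ (Fin d) => κB p.1 p.2) (Ω ×ˢ Ω))
    (hκC : ∀ x y, κC x y = ∫ z in Ω, κA x z * κB z y)
    (hpos : 0 < ∫ x in Ω, ∫ y in Ω, (κC x y) ^ 2) :
    Tendsto (fun N : ℕ =>
        frobNorm
          ((((N : ℝ) / (volume Ω).toReal) •
              Matrix.of (fun i j : Fin N => κC (X N i) (X N j))) -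
            (Matrix.of (fun i j : Fin N => κA (X N i) (X N j))) *
              (Matrix.of (fun i j : Fin N => κB (X N i) (X N j)))) /
        frobNorm
          (((N : ℝ) / (volume Ω).toReal) •
            Matrix.of (fun i j : Fin N => κC (X N i) (X N j))))
      atTop (nhds 0) := by
  classical
  set V := (volume Ω).toReal with hVdef
  have hV : 0 < V := hΩpos
  -- uniform convergence for the convolved kernel
  have h1 : ContinuousOn (fun q : ((EuclideanSpace ℝ (Fin d)) × (EuclideanSpace ℝ (Fin d))) × EuclideanSpace ℝ (Fin d) => κA q.1.1 q.2 * κB q.2 q.1.2)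
      ((Ω ×ˢ Ω) ×ˢ Ω) := by
    apply ContinuousOn.mul
    · exact ContinuousOn.comp'
        (f := fun q : ((EuclideanSpace ℝ (Fin d)) × (EuclideanSpace ℝ (Fin d))) ×
          EuclideanSpace ℝ (Fin d) => (q.1.1, q.2)) hκA
        (Continuous.continuousOn (by fun_prop)) (fun q hq => ⟨hq.1.1, hq.2⟩)
    · exact ContinuousOn.comp'
        (f := fun q : ((EuclideanSpace ℝ (Fin d)) × (EuclideanSpace ℝ (Fin d))) ×
          EuclideanSpace ℝ (Fin d) => (q.2, q.1.2)) hκB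
        (Continuous.continuousOn (by fun_prop)) (fun q hq => ⟨hq.2, hq.1.2⟩)
  have huAB : TendstoUniformlyOn
      (fun (N : ℕ) (p : (EuclideanSpace ℝ (Fin d)) × (EuclideanSpace ℝ (Fin d))) => V / N * ∑ i : Fin N, κA p.1 (X N i) * κB (X N i) p.2)
      (fun p : (EuclideanSpace ℝ (Fin d)) × (EuclideanSpace ℝ (Fin d)) => κC p.1 p.2) atTop (Ω ×ˢ Ω) := by
    have h0 := unifLim hΩc hX hunif (hΩc.prod hΩc)
      (h := fun (p : (EuclideanSpace ℝ (Fin d)) × (EuclideanSpace ℝ (Fin d))) z => κA p.1 z * κB z p.2) h1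
    have heq : (fun p : (EuclideanSpace ℝ (Fin d)) × (EuclideanSpace ℝ (Fin d)) => ∫ z in Ω, κA p.1 z * κB z p.2)
        = fun p : (EuclideanSpace ℝ (Fin d)) × (EuclideanSpace ℝ (Fin d)) => κC p.1 p.2 := funext fun p => (hκC p.1 p.2).symm
    rwa [heq] at h0
  have hSNcont : ∀ N : ℕ, ContinuousOn
      (fun p : (EuclideanSpace ℝ (Fin d)) × (EuclideanSpace ℝ (Fin d)) => V / N * ∑ i : Fin N, κA p.1 (X N i) * κB (X N i) p.2) (Ω ×ˢ Ω) := by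
    intro N
    apply ContinuousOn.mul continuousOn_const
    apply continuousOn_finset_sum
    intro i _
    apply ContinuousOn.mul
    · exact ContinuousOn.comp'
        (f := fun p : (EuclideanSpace ℝ (Fin d)) × (EuclideanSpace ℝ (Fin d)) =>
          (p.1, X N i)) hκA
        (Continuous.continuousOn (by fun_prop)) (fun p hp => ⟨hp.1, hX N i⟩)
    · exact ContinuousOn.comp'
        (f := fun p : (EuclideanSpace ℝ (Fin d)) × (EuclideanSpace ℝ (Fin d)) =>
          (X N i, p.2)) hκB
        (Continuous.continuousOn (by fun_prop)) (fun p hp => ⟨hX N i, hp.2⟩)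
  have hκCc : ContinuousOn (fun p : (EuclideanSpace ℝ (Fin d)) × (EuclideanSpace ℝ (Fin d)) => κC p.1 p.2) (Ω ×ˢ Ω) :=
    huAB.continuousOn (Eventually.of_forall hSNcont).frequently
  have hC2 : ContinuousOn (fun q : (EuclideanSpace ℝ (Fin d)) × (EuclideanSpace ℝ (Fin d)) => (κC q.1 q.2) ^ 2) (Ω ×ˢ Ω) := hκCc.pow 2
  -- uniform convergence for the squared kernel sums
  have huC : TendstoUniformlyOn
      (fun (N : ℕ) (x : EuclideanSpace ℝ (Fin d)) => V / N * ∑ j : Fin N, (κC x (X N j)) ^ 2)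
      (fun x : EuclideanSpace ℝ (Fin d) => ∫ z in Ω, (κC x z) ^ 2) atTop Ω :=
    unifLim hΩc hX hunif hΩc (h := fun (x : EuclideanSpace ℝ (Fin d)) z => (κC x z) ^ 2) hC2
  have hFNcont : ∀ N : ℕ, ContinuousOn
      (fun x : EuclideanSpace ℝ (Fin d) => V / N * ∑ j : Fin N, (κC x (X N j)) ^ 2) Ω := by
    intro N
    apply ContinuousOn.mul continuousOn_const
    apply continuousOn_finset_sum
    intro j _
    exact ContinuousOn.comp'
      (f := fun x : EuclideanSpace ℝ (Fin d) => (x, X N j)) hC2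
      (Continuous.continuousOn (by fun_prop)) (fun x hx => ⟨hx, hX N j⟩)
  have hFcont : ContinuousOn (fun x : EuclideanSpace ℝ (Fin d) => ∫ z in Ω, (κC x z) ^ 2) Ω :=
    huC.continuousOn (Eventually.of_forall hFNcont).frequently
  set c := ∫ x in Ω, ∫ y in Ω, (κC x y) ^ 2 with hcdef
  have hc : 0 < c := hpos
  -- the double-sum approximation of c
  have hs : Tendsto (fun N : ℕ => V / N * ∑ i : Fin N, ∫ z in Ω, (κC (X N i) z) ^ 2)
      atTop (nhds c) := hunif (fun x => ∫ z in Ω, (κC x z) ^ 2) hFcont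
  have hdiff : Tendsto (fun N : ℕ =>
      (V / N * ∑ i : Fin N, (V / N * ∑ j : Fin N, (κC (X N i) (X N j)) ^ 2))
        - (V / N * ∑ i : Fin N, ∫ z in Ω, (κC (X N i) z) ^ 2)) atTop (nhds 0) := by
    rw [Metric.tendsto_nhds]
    intro ε hε
    have hε' : 0 < ε / (V + 1) := by positivity
    filter_upwards [Metric.tendstoUniformlyOn_iff.mp huC (ε / (V + 1)) hε'] with N hN
    rw [Real.dist_eq, sub_zero, ← mul_sub, ← Finset.sum_sub_distrib]
    have hbd := absSumBound hV.le hε'.le (N := N)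
      (g := fun i => (V / N * ∑ j : Fin N, (κC (X N i) (X N j)) ^ 2)
        - ∫ z in Ω, (κC (X N i) z) ^ 2)
      (fun i => by
        have := hN (X N i) (hX N i)
        rw [Real.dist_eq] at this
        rw [abs_sub_comm]
        exact this.le)
    refine hbd.trans_lt ?_
    rw [mul_div_assoc']
    rw [div_lt_iff₀ (by linarith : (0:ℝ) < V + 1)]
    nlinarith [hε]
  have ha : Tendsto (fun N : ℕ =>
      V / N * ∑ i : Fin N, (V / N * ∑ j : Fin N, (κC (X N i) (X N j)) ^ 2))
      atTop (nhds c) := by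
    have := hdiff.add hs
    rw [zero_add] at this
    simpa using this
  -- final estimate
  rw [Metric.tendsto_nhds]
  intro ε hε
  have hsq : 0 < Real.sqrt (c / 2) := Real.sqrt_pos.2 (by linarith)
  set ε2 := ε * Real.sqrt (c / 2) / (V + 1) with hε2def
  have hε2 : 0 < ε2 := by
    apply div_pos (mul_pos hε hsq)
    linarith
  filter_upwards [Metric.tendstoUniformlyOn_iff.mp huAB ε2 hε2,
    ha.eventually (lt_mem_nhds (show c / 2 < c by linarith)),
    eventually_ge_atTop 1] with N hu hA hN1
  have hN0 : (0:ℝ) < N := by exact_mod_cast hN1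
  have hNV : (0:ℝ) < (N:ℝ) / V := div_pos hN0 hV
  set a := V / N * ∑ i : Fin N, (V / N * ∑ j : Fin N, (κC (X N i) (X N j)) ^ 2) with hadef
  set S := ∑ i : Fin N, ∑ j : Fin N, (κC (X N i) (X N j)) ^ 2 with hSdef
  have hSa : (V / N) ^ 2 * S = a := by
    rw [hadef, ← Finset.mul_sum, hSdef]
    ring
  have hS : S = ((N:ℝ) / V) ^ 2 * a := by
    rw [← hSa]
    field_simp
  have ha2 : 0 < a := lt_trans (by positivity) hA
  -- Frobenius norm of the scaled C matrix
  have hfrobC : frobNorm (((N : ℝ) / V) • Matrix.of (fun i j : Fin N => κC (X N i) (X N j)))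
      = ((N:ℝ) / V) ^ 2 * Real.sqrt a := by
    unfold frobNorm
    have hentries : ∑ i : Fin N, ∑ j : Fin N,
        ((((N : ℝ) / V) • Matrix.of (fun i j : Fin N => κC (X N i) (X N j))) i j) ^ 2
        = ((N:ℝ) / V) ^ 2 * S := by
      rw [hSdef, Finset.mul_sum]
      congr 1
      ext i
      rw [Finset.mul_sum]
      congr 1
      ext j
      simp [Matrix.smul_apply, smul_eq_mul, mul_pow]
    rw [hentries, hS, ← mul_assoc]
    rw [show ((N:ℝ)/V) ^ 2 * ((N:ℝ)/V) ^ 2 * a = (((N:ℝ)/V) ^ 2) ^ 2 * a by ring]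
    rw [Real.sqrt_mul (sq_nonneg _) a, Real.sqrt_sq (by positivity)]
  -- entrywise bound on the difference matrix
  have hone : (N:ℝ) / V * (V / N) = 1 := by
    field_simp
  have hentry : ∀ i j : Fin N,
      |((((N : ℝ) / V) • Matrix.of (fun i j : Fin N => κC (X N i) (X N j))
          - (Matrix.of (fun i j : Fin N => κA (X N i) (X N j))) *
            (Matrix.of (fun i j : Fin N => κB (X N i) (X N j)))) i j)|
        ≤ (N:ℝ) / V * ε2 := by
    intro i j
    have hmem : ((X N i, X N j) : (EuclideanSpace ℝ (Fin d)) × (EuclideanSpace ℝ (Fin d))) ∈ Ω ×ˢ Ω := ⟨hX N i, hX N j⟩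
    have hd := hu (X N i, X N j) hmem
    rw [Real.dist_eq] at hd
    have hDij : (((N : ℝ) / V) • Matrix.of (fun i j : Fin N => κC (X N i) (X N j))
          - (Matrix.of (fun i j : Fin N => κA (X N i) (X N j))) *
            (Matrix.of (fun i j : Fin N => κB (X N i) (X N j)))) i j
        = (N:ℝ) / V * (κC (X N i) (X N j)
            - V / N * ∑ k : Fin N, κA (X N i) (X N k) * κB (X N k) (X N j)) := by
      simp only [Matrix.sub_apply, Matrix.smul_apply, Matrix.of_apply, Matrix.mul_apply,
        smul_eq_mul]
      rw [mul_sub, ← mul_assoc, hone, one_mul]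
    rw [hDij, abs_mul, abs_of_nonneg hNV.le]
    exact mul_le_mul_of_nonneg_left hd.le hNV.le
  -- Frobenius norm bound on the difference matrix
  have hfrobD : frobNorm ((((N : ℝ) / V) • Matrix.of (fun i j : Fin N => κC (X N i) (X N j)))
          - (Matrix.of (fun i j : Fin N => κA (X N i) (X N j))) *
            (Matrix.of (fun i j : Fin N => κB (X N i) (X N j))))
      ≤ (N:ℝ) * ((N:ℝ) / V * ε2) := by
    unfold frobNorm
    have hb : ∑ i : Fin N, ∑ j : Fin N,
        (((((N : ℝ) / V) • Matrix.of (fun i j : Fin N => κC (X N i) (X N j)))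
          - (Matrix.of (fun i j : Fin N => κA (X N i) (X N j))) *
            (Matrix.of (fun i j : Fin N => κB (X N i) (X N j)))) i j) ^ 2
        ≤ ((N:ℝ) * ((N:ℝ) / V * ε2)) ^ 2 := by
      have hstep : ∀ i j : Fin N,
          (((((N : ℝ) / V) • Matrix.of (fun i j : Fin N => κC (X N i) (X N j)))
            - (Matrix.of (fun i j : Fin N => κA (X N i) (X N j))) *
              (Matrix.of (fun i j : Fin N => κB (X N i) (X N j)))) i j) ^ 2
          ≤ ((N:ℝ) / V * ε2) ^ 2 := by
        intro i j
        have := hentry i j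
        have habs := abs_le.mp this
        nlinarith [habs.1, habs.2]
      calc ∑ i : Fin N, ∑ j : Fin N, _ ≤ ∑ _i : Fin N, ∑ _j : Fin N, ((N:ℝ) / V * ε2) ^ 2 :=
            Finset.sum_le_sum fun i _ => Finset.sum_le_sum fun j _ => hstep i j
      _ = (N:ℝ) ^ 2 * ((N:ℝ) / V * ε2) ^ 2 := by
            simp [Finset.sum_const, Finset.card_univ]
            ring
      _ = ((N:ℝ) * ((N:ℝ) / V * ε2)) ^ 2 := by ring
    calc Real.sqrt _ ≤ Real.sqrt (((N:ℝ) * ((N:ℝ) / V * ε2)) ^ 2) := Real.sqrt_le_sqrt hb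
    _ = (N:ℝ) * ((N:ℝ) / V * ε2) := Real.sqrt_sq (by positivity)
  -- lower bound on the denominator
  have hYpos : (0:ℝ) < ((N:ℝ) / V) ^ 2 * Real.sqrt (c / 2) := by positivity
  have hYle : ((N:ℝ) / V) ^ 2 * Real.sqrt (c / 2)
      ≤ frobNorm (((N : ℝ) / V) • Matrix.of (fun i j : Fin N => κC (X N i) (X N j))) := by
    rw [hfrobC]
    exact mul_le_mul_of_nonneg_left (Real.sqrt_le_sqrt hA.le) (by positivity)
  rw [Real.dist_eq, sub_zero, abs_of_nonneg (div_nonneg (frobNorm_nonneg _)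
    (frobNorm_nonneg _))]
  calc frobNorm _ / frobNorm _
      ≤ ((N:ℝ) * ((N:ℝ) / V * ε2)) / (((N:ℝ) / V) ^ 2 * Real.sqrt (c / 2)) :=
        div_le_div₀ (by positivity) hfrobD hYpos hYle
  _ = ε * (V / (V + 1)) := by
        rw [hε2def]
        field_simp
  _ < ε := by
        have hlt : V / (V + 1) < 1 := (div_lt_one (by linarith)).2 (by linarith)
        calc ε * (V / (V + 1)) < ε * 1 := mul_lt_mul_of_pos_left hlt hε
        _ = ε := mul_one ε
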